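/- arXiv:math/0601573 — 8 statements merged into one kernel-verified Lean document; each statement's English description precedes it below -/
import Mathlib

section
/- For every positive integer l, one has the polynomial identity ∑_{k odd, k ∣ l} t^{(l−l/k)/2} · γ_{l/k}(t) = 1 in ℤ[t]; that is, the polynomials γ_m solve the defining relation ∑_{k odd, k ∣ l} t^{−l/(2k)} γ_{l/k}(t) = t^{−l/2} of the character formula. -/
open Polynomial

/-- For a positive integer `m`, the polynomial
`γ_m(t) = ∑_{k odd, k ∣ m} μ(k) · t^((m − m/k)/2)` in `ℤ[t]`. -/
noncomputable def gammaPoly (m : ℕ) : Polynomial ℤ :=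
  ∑ k ∈ m.divisors.filter (fun k => Odd k),
    Polynomial.C (ArithmeticFunction.moebius k) * Polynomial.X ^ ((m - m / k) / 2)

lemma sum_moebius_divisors (d : ℕ) :
    ∑ j ∈ d.divisors, (ArithmeticFunction.moebius j : ℤ) = if d = 1 then 1 else 0 := by
  calc ∑ j ∈ d.divisors, (ArithmeticFunction.moebius j : ℤ)
      = (ArithmeticFunction.moebius * ArithmeticFunction.zeta : ArithmeticFunction ℤ) d :=
        ArithmeticFunction.coe_mul_zeta_apply.symm
    _ = (1 : ArithmeticFunction ℤ) d := by rw [ArithmeticFunction.moebius_mul_coe_zeta]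
    _ = if d = 1 then 1 else 0 := ArithmeticFunction.one_apply

lemma odd_of_dvd_odd {j d : ℕ} (hdodd : Odd d) (hjd : j ∣ d) : Odd j := by
  rcases hjd with ⟨m, rfl⟩
  exact (Nat.odd_mul.mp hdodd).1

lemma even_sub_div {l k : ℕ} (hk : Odd k) (hkl : k ∣ l) : Even (l - l / k) := by
  rcases hkl with ⟨m, rfl⟩
  rcases Nat.eq_zero_or_pos k with rfl | hkpos
  · simp at hk
  rw [Nat.mul_div_cancel_left _ hkpos]
  rw [Nat.even_sub (Nat.le_mul_of_pos_left _ hkpos)]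
  constructor
  · intro h
    rcases (Nat.even_mul.mp h) with h | h
    · exact absurd h (Nat.not_even_iff_odd.mpr hk)
    · exact h
  · intro h; exact Nat.even_mul.mpr (Or.inr h)

/-- Exponent arithmetic. -/
lemma exponent_add {l k j : ℕ} (hk : Odd k) (hj : Odd j) (hkl : k ∣ l) (hjl : j ∣ l / k) :
    (l - l / k) / 2 + (l / k - (l / k) / j) / 2 = (l - l / (k * j)) / 2 := by
  have h1 : Even (l - l / k) := even_sub_div hk hkl
  have h2 : Even (l / k - (l / k) / j) := even_sub_div hj hjl
  have hdd : l / k / j = l / (k * j) := Nat.div_div_eq_div_mul l k j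
  have hle1 : l / k ≤ l := Nat.div_le_self _ _
  have hle2 : l / (k * j) ≤ l / k := hdd ▸ Nat.div_le_self _ _
  rcases h1 with ⟨a, ha⟩
  rcases h2 with ⟨b, hb⟩
  rw [hdd] at hb
  omega

/-- For every positive integer `l`,
`∑_{k odd, k ∣ l} t^((l − l/k)/2) · γ_{l/k}(t) = 1` in `ℤ[t]`. -/
theorem gammaPoly_defining_relation (l : ℕ) (hl : 1 ≤ l) :
    ∑ k ∈ l.divisors.filter (fun k => Odd k),
      Polynomial.X ^ ((l - l / k) / 2) * gammaPoly (l / k) = 1 := by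
  have hl0 : l ≠ 0 := by omega
  -- rewrite as a sigma sum
  have step1 :
      ∑ k ∈ l.divisors.filter (fun k => Odd k),
        Polynomial.X ^ ((l - l / k) / 2) * gammaPoly (l / k)
      = ∑ p ∈ (l.divisors.filter (fun k => Odd k)).sigma
            (fun k => (l / k).divisors.filter (fun j => Odd j)),
          Polynomial.C (ArithmeticFunction.moebius p.2)
            * Polynomial.X ^ ((l - l / (p.1 * p.2)) / 2) := by
    rw [Finset.sum_sigma]
    refine Finset.sum_congr rfl ?_
    intro k hk
    simp only [Finset.mem_filter, Nat.mem_divisors] at hk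
    obtain ⟨⟨hkl, _⟩, hkodd⟩ := hk
    rw [gammaPoly, Finset.mul_sum]
    refine Finset.sum_congr rfl ?_
    intro j hj
    simp only [Finset.mem_filter, Nat.mem_divisors] at hj
    obtain ⟨⟨hjl, _⟩, hjodd⟩ := hj
    rw [← exponent_add hkodd hjodd hkl hjl]
    ring
  rw [step1]
  -- reindex to (d, j) with d odd divisor of l and j ∣ d
  have step2 :
      ∑ p ∈ (l.divisors.filter (fun k => Odd k)).sigma
            (fun k => (l / k).divisors.filter (fun j => Odd j)),
          Polynomial.C (ArithmeticFunction.moebius p.2)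
            * Polynomial.X ^ ((l - l / (p.1 * p.2)) / 2)
      = ∑ p ∈ (l.divisors.filter (fun d => Odd d)).sigma (fun d => d.divisors),
          Polynomial.C (ArithmeticFunction.moebius p.2)
            * Polynomial.X ^ ((l - l / p.1) / 2) := by
    refine Finset.sum_nbij' (fun p => ⟨p.1 * p.2, p.2⟩) (fun p => ⟨p.1 / p.2, p.2⟩)
      ?_ ?_ ?_ ?_ ?_
    · rintro ⟨k, j⟩ hp
      simp only [Finset.mem_sigma, Finset.mem_filter, Nat.mem_divisors] at hp ⊢
      obtain ⟨⟨⟨hkl, _⟩, hkodd⟩, ⟨hjl, _⟩, hjodd⟩ := hp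
      have hkj : k * j ∣ l := (Nat.dvd_div_iff_mul_dvd hkl).mp hjl
      have hkj0 : k * j ≠ 0 := by
        rintro h
        exact hl0 (Nat.eq_zero_of_zero_dvd (h ▸ hkj))
      exact ⟨⟨⟨hkj, hl0⟩, hkodd.mul hjodd⟩, Dvd.intro_left k rfl, hkj0⟩
    · rintro ⟨d, j⟩ hp
      simp only [Finset.mem_sigma, Finset.mem_filter, Nat.mem_divisors] at hp ⊢
      obtain ⟨⟨⟨hdl, _⟩, hdodd⟩, hjd, hd0⟩ := hp
      have hjodd : Odd j := odd_of_dvd_odd hdodd hjd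
      have hdj : d / j ∣ l := (Nat.div_dvd_of_dvd hjd).trans hdl
      have hdjodd : Odd (d / j) := odd_of_dvd_odd hdodd (Nat.div_dvd_of_dvd hjd)
      have hjpos : 0 < j := Nat.pos_of_ne_zero (by rintro rfl; exact hd0 (Nat.eq_zero_of_zero_dvd hjd))
      have hdjpos : 0 < d / j := Nat.div_pos (Nat.le_of_dvd (Nat.pos_of_ne_zero hd0) hjd) hjpos
      have hldj0 : l / (d / j) ≠ 0 :=
        Nat.ne_of_gt (Nat.div_pos (Nat.le_of_dvd (Nat.pos_of_ne_zero hl0) hdj) hdjpos)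
      have hjdvd : j ∣ l / (d / j) := by
        rw [Nat.dvd_div_iff_mul_dvd hdj, Nat.div_mul_cancel hjd]
        exact hdl
      exact ⟨⟨⟨hdj, hl0⟩, hdjodd⟩, ⟨hjdvd, hldj0⟩, hjodd⟩
    · rintro ⟨k, j⟩ hp
      simp only [Finset.mem_sigma, Finset.mem_filter, Nat.mem_divisors] at hp
      obtain ⟨_, _, hjodd⟩ := hp
      have hj0 : j ≠ 0 := by rintro rfl; simp at hjodd
      have hc : k * j / j = k := by
        rw [mul_comm]; exact Nat.mul_div_cancel_left k (Nat.pos_of_ne_zero hj0)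
      simp [hc]
    · rintro ⟨d, j⟩ hp
      simp only [Finset.mem_sigma, Finset.mem_filter, Nat.mem_divisors] at hp
      obtain ⟨_, hjd, _⟩ := hp
      simp [Nat.div_mul_cancel hjd]
    · rintro ⟨k, j⟩ _
      rfl
  rw [step2, Finset.sum_sigma]
  have step3 : ∀ d ∈ l.divisors.filter (fun d => Odd d),
      (∑ j ∈ d.divisors, Polynomial.C (ArithmeticFunction.moebius j)
          * Polynomial.X ^ ((l - l / d) / 2))
      = (if d = 1 then 1 else 0) * Polynomial.X ^ ((l - l / d) / 2) := by
    intro d _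
    rw [← Finset.sum_mul, ← map_sum, sum_moebius_divisors]
    split <;> simp
  rw [Finset.sum_congr rfl step3]
  simp only [ite_mul, one_mul, zero_mul]
  rw [Finset.sum_ite_eq' (l.divisors.filter (fun d => Odd d)) 1
    (fun d => Polynomial.X ^ ((l - l / d) / 2))]
  simp [Nat.one_mem_divisors.mpr hl0, Nat.sub_self]
end

section
/- With the above notation, for every finitely supported n : ℕ≥1 → ℕ and every m ≥ 1 such that n(j) = 0 for all j > m, one has P(n + 2·1_m) = ((c_m + o_m(n))² − (m·n(m))²) · P(n) in R, where 1_m denotes the indicator function of {m}. -/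
/-- `o_m(n) = ∑_{k ≥ 1, 2^k ∣ m} (m/2^k) · n(m/2^k)`. -/
def oFun (n : ℕ →₀ ℕ) (m : ℕ) : ℕ :=
  ∑ k ∈ (Finset.Icc 1 m).filter (fun k => 2 ^ k ∣ m), (m / 2 ^ k) * n (m / 2 ^ k)

/-- The explicit product
`P(n) = ∏_{l : n(l) ≥ 1} (c_l + o_l(n)) · ∏_{i=0}^{n(l)−2} (c_l + o_l(n) + l·(n(l)−2−2i))`. -/
def Pfun {R : Type*} [CommRing R] (c : ℕ → R) (n : ℕ →₀ ℕ) : R :=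
  ∏ l ∈ n.support,
    (c l + (oFun n l : R)) *
      ∏ i ∈ Finset.range (n l - 1),
        (c l + (oFun n l : R) + (((l : ℤ) * ((n l : ℤ) - 2 - 2 * (i : ℤ)) : ℤ) : R))

def gFun {R : Type*} [CommRing R] (c : ℕ → R) (f : ℕ →₀ ℕ) (l : ℕ) : R :=
  (c l + (oFun f l : R)) *
    ∏ i ∈ Finset.range (f l - 1),
      (c l + (oFun f l : R) + (((l : ℤ) * ((f l : ℤ) - 2 - 2 * (i : ℤ)) : ℤ) : R))

lemma Pfun_eq {R : Type*} [CommRing R] (c : ℕ → R) (n : ℕ →₀ ℕ) :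
    Pfun c n = ∏ l ∈ n.support, gFun c n l := rfl

lemma oFun_add_single (n : ℕ →₀ ℕ) (m l : ℕ) (hm : 1 ≤ m) (hl : l ≤ m) :
    oFun (n + Finsupp.single m 2) l = oFun n l := by
  unfold oFun
  refine Finset.sum_congr rfl ?_
  intro k hk
  simp only [Finset.mem_filter, Finset.mem_Icc] at hk
  have h2 : 2 ≤ 2 ^ k := by
    calc 2 = 2 ^ 1 := by norm_num
    _ ≤ 2 ^ k := Nat.pow_le_pow_right (by norm_num) hk.1.1
  have hd : l / 2 ^ k ≤ l / 2 := Nat.div_le_div_left h2 (by norm_num)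
  have hne : l / 2 ^ k ≠ m := by omega
  rw [Finsupp.add_apply, Finsupp.single_eq_of_ne' (fun hh => hne hh.symm), add_zero]

lemma support_add_single (n : ℕ →₀ ℕ) (m : ℕ) :
    (n + Finsupp.single m 2).support = insert m n.support := by
  ext a
  simp only [Finsupp.mem_support_iff, Finsupp.add_apply, Finsupp.single_apply,
    Finset.mem_insert]
  by_cases hh : m = a
  · subst hh; simp
  · simp [hh]; omega

lemma key {R : Type*} [CommRing R] (a b : R) (N : ℕ) (hN : 1 ≤ N) :
    a * ∏ i ∈ Finset.range (N + 1), (a + b * ((N : R) + 2 - 2 - 2 * i)) =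
      (a ^ 2 - (b * N) ^ 2) *
        (a * ∏ i ∈ Finset.range (N - 1), (a + b * ((N : R) - 2 - 2 * i))) := by
  obtain ⟨M, rfl⟩ := Nat.exists_eq_add_of_le hN
  rw [show 1 + M + 1 = (M + 1) + 1 from by omega, show 1 + M - 1 = M from by omega,
    Finset.prod_range_succ, Finset.prod_range_succ']
  push_cast
  have hP : ∀ x ∈ Finset.range M,
      a + b * (1 + (M : R) + 2 - 2 - 2 * ((x : R) + 1)) =
        a + b * (1 + (M : R) - 2 - 2 * (x : R)) := by
    intro x _; ring
  rw [Finset.prod_congr rfl hP]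
  ring

/-- The quadratic recurrence: if `n(j) = 0` for all `j > m` (with `m ≥ 1` and `n`
supported on positive integers), then
`P(n + 2·1_m) = ((c_m + o_m(n))² − (m·n(m))²) · P(n)`. -/
theorem Pfun_add_two {R : Type*} [CommRing R] (c : ℕ → R) (n : ℕ →₀ ℕ)
    (h0 : n 0 = 0) (m : ℕ) (hm : 1 ≤ m) (h : ∀ j, m < j → n j = 0) :
    Pfun c (n + Finsupp.single m 2) =
      ((c m + (oFun n m : R)) ^ 2 - ((m : R) * (n m : R)) ^ 2) * Pfun c n := by
  set n' := n + Finsupp.single m 2 with hn'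
  have hle : ∀ l ∈ n.support, l ≤ m := by
    intro l hl
    by_contra hc
    exact (Finsupp.mem_support_iff.mp hl) (h l (by omega))
  have happ : ∀ l, l ≠ m → n' l = n l := by
    intro l hl
    rw [hn', Finsupp.add_apply, Finsupp.single_eq_of_ne' (fun hh => hl hh.symm), add_zero]
  have happm : n' m = n m + 2 := by
    rw [hn', Finsupp.add_apply, Finsupp.single_eq_same]
  have hgeq : ∀ l ∈ n.support.erase m, gFun c n' l = gFun c n l := by
    intro l hl
    obtain ⟨hlm, hls⟩ := Finset.mem_erase.mp hl
    unfold gFun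
    simp only [happ l hlm, @id (oFun n' l = oFun n l) (oFun_add_single n m l hm (hle l hls))]
  have hinsert : insert m n.support = insert m (n.support.erase m) := by
    ext a; simp only [Finset.mem_insert, Finset.mem_erase]; tauto
  have hL : Pfun c n' = gFun c n' m * ∏ l ∈ n.support.erase m, gFun c n l := by
    rw [Pfun_eq, support_add_single, hinsert,
      Finset.prod_insert (Finset.notMem_erase m _)]
    exact congrArg _ (Finset.prod_congr rfl hgeq)
  by_cases hms : m ∈ n.support
  · have hN : 1 ≤ n m := Nat.one_le_iff_ne_zero.mpr (Finsupp.mem_support_iff.mp hms)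
    have hgm : gFun c n' m =
        ((c m + (oFun n m : R)) ^ 2 - ((m : R) * (n m : R)) ^ 2) * gFun c n m := by
      unfold gFun
      simp only [happm, @id (oFun n' m = oFun n m) (oFun_add_single n m m hm le_rfl),
        show n m + 2 - 1 = n m + 1 from by omega]
      push_cast
      exact key (c m + (oFun n m : R)) (m : R) (n m) hN
    rw [hL, hgm, Pfun_eq, ← Finset.mul_prod_erase _ _ hms]
    ring
  · have hnm : n m = 0 := by
      by_contra hc; exact hms (Finsupp.mem_support_iff.mpr hc)
    have hgm : gFun c n' m = (c m + (oFun n m : R)) ^ 2 := by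
      unfold gFun
      simp only [happm, @id (oFun n' m = oFun n m) (oFun_add_single n m m hm le_rfl), hnm]
      norm_num [Finset.prod_range_one]
      ring
    rw [hL, hgm, Finset.erase_eq_of_notMem hms, Pfun_eq, hnm]
    push_cast
    ring
end

section
/- With the above notation, for every finitely supported n : ℕ≥1 → ℕ and every m ≥ 1 such that n(j) = 0 for all j ≥ m, one has P(n + 1_m) = (c_m + o_m(n)) · P(n) in R, where 1_m denotes the indicator function of {m}. -/
/-- The linear recurrence: if `n(j) = 0` for all `j ≥ m` (with `m ≥ 1` and `n`
supported on positive integers), then `P(n + 1_m) = (c_m + o_m(n)) · P(n)`. -/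
theorem Pfun_add_one {R : Type*} [CommRing R] (c : ℕ → R) (n : ℕ →₀ ℕ)
    (h0 : n 0 = 0) (m : ℕ) (hm : 1 ≤ m) (h : ∀ j, m ≤ j → n j = 0) :
    Pfun c (n + Finsupp.single m 1) = (c m + (oFun n m : R)) * Pfun c n := by
  have hnm : n m = 0 := h m le_rfl
  have hmem : m ∉ n.support := by simp [hnm]
  have hlt : ∀ l ∈ n.support, l < m := by
    intro l hl
    by_contra hc
    push_neg at hc
    exact (Finsupp.mem_support_iff.mp hl) (h l hc)
  have hoeq : ∀ l, l ≤ m → oFun (n + Finsupp.single m 1) l = oFun n l := by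
    intro l hl
    unfold oFun
    refine Finset.sum_congr rfl fun k hk => ?_
    simp only [Finset.mem_filter, Finset.mem_Icc] at hk
    obtain ⟨⟨hk1, hkl⟩, hdvd⟩ := hk
    have hlpos : 1 ≤ l := le_trans hk1 hkl
    have hne : l / 2 ^ k ≠ m := by
      have : l / 2 ^ k < l := Nat.div_lt_self hlpos (Nat.one_lt_two_pow (by omega))
      omega
    simp [Finsupp.add_apply, Finsupp.single_apply, Ne.symm hne]
  have hval : ∀ l ∈ n.support, (n + Finsupp.single m 1 : ℕ →₀ ℕ) l = n l := by
    intro l hl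
    have := (hlt l hl).ne
    simp [Finsupp.add_apply, Finsupp.single_apply, Ne.symm this]
  have hsup : (n + Finsupp.single m 1).support = insert m n.support := by
    rw [Finsupp.support_add_eq, Finsupp.support_single_ne_zero m one_ne_zero]
    · rw [Finset.union_comm]; rfl
    · rw [Finsupp.support_single_ne_zero m one_ne_zero]
      simpa using hmem
  have hm1 : (n + Finsupp.single m 1 : ℕ →₀ ℕ) m = 1 := by simp [hnm]
  unfold Pfun
  rw [hsup, Finset.prod_insert hmem, hm1, hoeq m le_rfl]
  simp only [Nat.sub_self, Finset.range_zero, Finset.prod_empty, mul_one]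
  congr 1
  refine Finset.prod_congr rfl fun l hl => ?_
  rw [hval l hl, hoeq l (hlt l hl).le]
end

section
/- For every real number c and every integer n ≥ 1, the n-th derivative at 0 of the function u ↦ exp(c · arsinh(u)) equals c · ∏_{i=0}^{n−2} (c + n − 2 − 2i), where the product is empty (equal to 1) when n = 1. -/
open Real Finset
open scoped ContDiff

noncomputable def Aseq (c : ℝ) : ℕ → ℝ
  | 0 => 1
  | 1 => c
  | (n+2) => (c^2 - (n:ℝ)^2) * Aseq c n

noncomputable def fc (c : ℝ) : ℝ → ℝ := fun u => Real.exp (c * Real.arsinh u)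

lemma hfc (c : ℝ) : ContDiff ℝ ∞ (fc c) :=
  (contDiff_const.mul Real.contDiff_arsinh).exp

lemma hFc (c : ℝ) (n : ℕ) : ContDiff ℝ ∞ (iteratedDeriv n (fc c)) := by
  rw [iteratedDeriv_eq_iterate]; exact (hfc c).iterate_deriv n

lemma hasDerivF (c : ℝ) (n : ℕ) (u : ℝ) :
    HasDerivAt (iteratedDeriv n (fc c)) (iteratedDeriv (n+1) (fc c) u) u := by
  rw [iteratedDeriv_succ]
  exact (((hFc c n).differentiable (by simp)) u).hasDerivAt

lemma hs (u : ℝ) : HasDerivAt (fun u : ℝ => √(1+u^2)) (u / √(1+u^2)) u := by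
  have h1 : HasDerivAt (fun u : ℝ => 1 + u^2) (2*u) u := by
    simpa using ((hasDerivAt_pow 2 u).const_add 1)
  have h2 : (1:ℝ) + u^2 ≠ 0 := by positivity
  have := h1.sqrt h2
  convert this using 1
  rw [eq_div_iff (by positivity)]
  field_simp

lemma sqrt_ne (u : ℝ) : √(1+u^2) ≠ 0 := by positivity

lemma hd1 (c u : ℝ) : HasDerivAt (fc c) (c * (√(1+u^2))⁻¹ * fc c u) u := by
  have h1 : HasDerivAt (fun u : ℝ => c * arsinh u) (c * (√(1+u^2))⁻¹) u :=
    (Real.hasDerivAt_arsinh u).const_mul c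
  have := h1.exp
  convert this using 1
  · rfl
  show c * _ * Real.exp (c * arsinh u) = _; ring

lemma F1 (c u : ℝ) : iteratedDeriv 1 (fc c) u = c * (√(1+u^2))⁻¹ * fc c u := by
  rw [iteratedDeriv_one]; exact (hd1 c u).deriv

lemma F2ode (c u : ℝ) :
    (1+u^2) * iteratedDeriv 2 (fc c) u + u * iteratedDeriv 1 (fc c) u
      - c^2 * iteratedDeriv 0 (fc c) u = 0 := by
  set s := √(1+u^2) with hsdef
  have hs2 : s^2 = 1 + u^2 := Real.sq_sqrt (by positivity)
  have hsne : s ≠ 0 := sqrt_ne u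
  have hinv : HasDerivAt (fun u : ℝ => (√(1+u^2))⁻¹) (-(u / s) / s^2) u :=
    (hs u).inv hsne
  have hd2 : HasDerivAt (fun u : ℝ => c * (√(1+u^2))⁻¹ * fc c u)
      ((c * (-(u / s) / s^2)) * fc c u + (c * s⁻¹) * (c * s⁻¹ * fc c u)) u :=
    ((hinv.const_mul c).mul (hd1 c u))
  have h2 : iteratedDeriv 2 (fc c) u
      = (c * (-(u / s) / s^2)) * fc c u + (c * s⁻¹) * (c * s⁻¹ * fc c u) := by
    rw [iteratedDeriv_succ]
    have : deriv (iteratedDeriv 1 (fc c)) u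
        = deriv (fun u : ℝ => c * (√(1+u^2))⁻¹ * fc c u) u := by
      congr 1; funext v; exact F1 c v
    rw [this, hd2.deriv]
  rw [h2, F1, iteratedDeriv_zero]
  have hu : (1:ℝ) + u^2 = s^2 := hs2.symm
  field_simp
  rw [← hsdef]
  linear_combination (c*fc c u*(-u+c*s)*s) * hu

lemma ode (c : ℝ) (n : ℕ) : ∀ u : ℝ,
    (1+u^2) * iteratedDeriv (n+2) (fc c) u + (2*(n:ℝ)+1) * u * iteratedDeriv (n+1) (fc c) u
      + ((n:ℝ)^2 - c^2) * iteratedDeriv n (fc c) u = 0 := by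
  induction n with
  | zero =>
    intro u
    have := F2ode c u
    push_cast
    linarith
  | succ n ih =>
    intro u
    set F := fun k => iteratedDeriv k (fc c) with hF
    have h1 : HasDerivAt (fun u : ℝ => 1 + u^2) (2*u) u := by
      simpa using ((hasDerivAt_pow 2 u).const_add 1)
    have hid : HasDerivAt (fun u : ℝ => u) 1 u := hasDerivAt_id u
    have hD : HasDerivAt
        (fun u => (1+u^2) * F (n+2) u + (2*(n:ℝ)+1) * u * F (n+1) u + ((n:ℝ)^2 - c^2) * F n u)
        ((2*u) * F (n+2) u + (1+u^2) * F (n+3) u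
          + ((2*(n:ℝ)+1) * 1 * F (n+1) u + ((2*(n:ℝ)+1) * u) * F (n+2) u)
          + ((n:ℝ)^2 - c^2) * F (n+1) u) u := by
      exact ((h1.mul (hasDerivF c (n+2) u)).add
        (((hid.const_mul (2*(n:ℝ)+1)).mul (hasDerivF c (n+1) u)))).add
        ((hasDerivF c n u).const_mul ((n:ℝ)^2 - c^2))
    have hGz : (fun u => (1+u^2) * F (n+2) u + (2*(n:ℝ)+1) * u * F (n+1) u
        + ((n:ℝ)^2 - c^2) * F n u) = fun _ : ℝ => (0:ℝ) := funext ih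
    have hzero : HasDerivAt (fun u => (1+u^2) * F (n+2) u + (2*(n:ℝ)+1) * u * F (n+1) u
        + ((n:ℝ)^2 - c^2) * F n u) 0 u := by
      rw [hGz]; exact hasDerivAt_const u 0
    have hD0 := hD.unique hzero
    push_cast
    show (1+u^2) * F (n+3) u + (2*((n:ℝ)+1)+1) * u * F (n+2) u
      + (((n:ℝ)+1)^2 - c^2) * F (n+1) u = 0
    linear_combination hD0

lemma rec0 (c : ℝ) (n : ℕ) :
    iteratedDeriv (n+2) (fc c) 0 = (c^2 - (n:ℝ)^2) * iteratedDeriv n (fc c) 0 := by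
  have := ode c n 0
  norm_num at this
  linarith

lemma F00 (c : ℝ) : iteratedDeriv 0 (fc c) 0 = 1 := by
  simp [fc]

lemma F10 (c : ℝ) : iteratedDeriv 1 (fc c) 0 = c := by
  rw [F1]
  simp [fc]

theorem key_s8 (c : ℝ) : ∀ n : ℕ, iteratedDeriv n (fc c) 0 = Aseq c n
  | 0 => F00 c
  | 1 => F10 c
  | (n+2) => by rw [rec0 c n, key_s8 c n]; simp [Aseq]

theorem Aform (c : ℝ) : ∀ n : ℕ,
    Aseq c (n+1) = c * ∏ i ∈ Finset.range n, (c + ((n+1 : ℕ) : ℝ) - 2 - 2 * i)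
  | 0 => by simp [Aseq]
  | 1 => by simp [Aseq]; ring
  | (n+2) => by
    have ih := Aform c n
    show Aseq c (n+1+2) = _
    rw [show Aseq c (n+1+2) = (c^2 - ((n+1:ℕ):ℝ)^2) * Aseq c (n+1) from by simp [Aseq], ih]
    rw [Finset.prod_range_succ, Finset.prod_range_succ']
    have hcongr : ∏ i ∈ Finset.range n, (c + ((n:ℝ) + 2 + 1) - 2 - 2 * ((i:ℝ)+1))
        = ∏ i ∈ Finset.range n, (c + ((n:ℝ) + 1) - 2 - 2 * (i:ℝ)) := by
      apply Finset.prod_congr rfl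
      intro i _
      ring
    push_cast
    rw [hcongr]
    ring

/-- For every real `c` and integer `n ≥ 1`, the `n`-th derivative at `0` of
`u ↦ exp(c · arsinh u)` equals `c · ∏_{i=0}^{n−2} (c + n − 2 − 2i)`. -/
theorem iteratedDeriv_exp_arsinh (c : ℝ) (n : ℕ) (hn : 1 ≤ n) :
    iteratedDeriv n (fun u : ℝ => Real.exp (c * Real.arsinh u)) 0 =
      c * ∏ i ∈ Finset.range (n - 1), (c + (n : ℝ) - 2 - 2 * i) := by
  obtain ⟨m, rfl⟩ := Nat.exists_eq_add_of_le hn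
  have h1 : iteratedDeriv (m+1) (fc c) 0
      = c * ∏ i ∈ Finset.range m, (c + ((m+1 : ℕ) : ℝ) - 2 - 2 * i) :=
    (key_s8 c (m+1)).trans (Aform c m)
  rw [Nat.add_comm 1 m, Nat.add_sub_cancel]
  exact h1
end

section
/- For every real t > 0 and every natural number n, the n-th derivative at 0 of the function u ↦ exp(arsinh(u·√t)/√t) equals ∏_{i=0}^{⌊(n−2)/2⌋} (1 − (n−2−2i)²·t), where the product is empty (equal to 1) when n ≤ 1. (This is the exponential generating function identity for the Poincaré polynomials ∏_{i=0}^{⌊(n−2)/2⌋}(1−(n−2−2i)²t) of the real moduli spaces M_{n+1} = \overline{M_{0,n+1}}(ℝ).) -/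
open Real
open scoped ContDiff

private lemma diffIter {g : ℝ → ℝ} (hg : ContDiff ℝ ∞ g) (k : ℕ) :
    Differentiable ℝ (iteratedDeriv k g) :=
  hg.differentiable_iteratedDeriv k (ENat.natCast_lt_of_coe_top_le_withTop le_rfl k)

private lemma contDiff_deriv {g : ℝ → ℝ} (hg : ContDiff ℝ ∞ g) : ContDiff ℝ ∞ (deriv g) :=
  (contDiff_infty_iff_deriv.mp hg).2

private lemma iter_add {g h : ℝ → ℝ} (hg : ContDiff ℝ ∞ g) (hh : ContDiff ℝ ∞ h) (n : ℕ) :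
    iteratedDeriv n (fun x => g x + h x) =
      fun x => iteratedDeriv n g x + iteratedDeriv n h x := by
  induction n with
  | zero => simp
  | succ n ih =>
    funext x
    rw [iteratedDeriv_succ, ih, iteratedDeriv_succ, iteratedDeriv_succ]
    exact deriv_fun_add ((diffIter hg n).differentiableAt) ((diffIter hh n).differentiableAt)

private lemma deriv_lin {c : ℝ} {g : ℝ → ℝ} (hg : Differentiable ℝ g) :
    deriv (fun x => c * x * g x) = fun x => c * x * deriv g x + c * g x := by
  funext x
  rw [deriv_fun_mul (by fun_prop) (hg.differentiableAt)]
  have : deriv (fun x : ℝ => c * x) x = c := by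
    simpa using (((hasDerivAt_id x).const_mul c).deriv)
  rw [this]; ring

private lemma deriv_quad {c : ℝ} {g : ℝ → ℝ} (hg : Differentiable ℝ g) :
    deriv (fun x => (1 + c * x ^ 2) * g x) =
      fun x => (1 + c * x ^ 2) * deriv g x + 2 * c * x * g x := by
  funext x
  rw [deriv_fun_mul (by fun_prop) (hg.differentiableAt)]
  have : deriv (fun x : ℝ => 1 + c * x ^ 2) x = 2 * c * x := by
    have h1 : HasDerivAt (fun x : ℝ => 1 + c * x ^ 2) (c * (2 * x ^ 1)) x := by
      simpa using ((hasDerivAt_pow 2 x).const_mul c).const_add 1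
    simpa using h1.deriv.trans (by ring)
  rw [this]; ring

private lemma leib_lin {c : ℝ} {g : ℝ → ℝ} (hg : ContDiff ℝ ∞ g) (n : ℕ) :
    iteratedDeriv (n + 1) (fun x => c * x * g x) =
      fun x => c * x * iteratedDeriv (n + 1) g x + c * (n + 1) * iteratedDeriv n g x := by
  induction n with
  | zero =>
    rw [iteratedDeriv_one, deriv_lin (hg.differentiable (by norm_num))]
    simp [iteratedDeriv_one, iteratedDeriv_zero]
  | succ n ih =>
    funext x
    rw [iteratedDeriv_succ, ih]
    have d1 : Differentiable ℝ (iteratedDeriv (n + 1) g) := diffIter hg (n + 1)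
    have d0 : Differentiable ℝ (iteratedDeriv n g) := diffIter hg n
    rw [deriv_fun_add (by fun_prop) (by fun_prop)]
    rw [show (fun x => c * x * iteratedDeriv (n + 1) g x) =
        fun x => c * x * iteratedDeriv (n + 1) g x from rfl]
    rw [congrFun (deriv_lin d1) x, deriv_const_mul _ (d0.differentiableAt),
      ← iteratedDeriv_succ, ← iteratedDeriv_succ]
    push_cast
    ring

private lemma leib_quad {c : ℝ} {g : ℝ → ℝ} (hg : ContDiff ℝ ∞ g) (n : ℕ) :
    iteratedDeriv (n + 2) (fun x => (1 + c * x ^ 2) * g x) =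
      fun x => (1 + c * x ^ 2) * iteratedDeriv (n + 2) g x +
        2 * c * x * (n + 2) * iteratedDeriv (n + 1) g x +
        c * (n + 2) * (n + 1) * iteratedDeriv n g x := by
  induction n with
  | zero =>
    have hg' : Differentiable ℝ g := hg.differentiable (by norm_num)
    have hg1 : Differentiable ℝ (deriv g) := (contDiff_deriv hg).differentiable (by norm_num)
    funext x
    rw [iteratedDeriv_succ, iteratedDeriv_one, deriv_quad hg']
    rw [deriv_fun_add (by fun_prop) (by fun_prop), congrFun (deriv_quad hg1) x,
      deriv_fun_mul (by fun_prop) (hg'.differentiableAt)]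
    have hc : deriv (fun x : ℝ => 2 * c * x) x = 2 * c := by
      simpa using ((hasDerivAt_id x).const_mul (2 * c)).deriv
    rw [hc, show iteratedDeriv 2 g = deriv (deriv g) by
      rw [iteratedDeriv_succ, iteratedDeriv_one], iteratedDeriv_one, iteratedDeriv_zero]
    push_cast; ring
  | succ n ih =>
    funext x
    have d2 : Differentiable ℝ (iteratedDeriv (n + 2) g) := diffIter hg (n + 2)
    have d1 : Differentiable ℝ (iteratedDeriv (n + 1) g) := diffIter hg (n + 1)
    have d0 : Differentiable ℝ (iteratedDeriv n g) := diffIter hg n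
    rw [iteratedDeriv_succ, ih]
    rw [deriv_fun_add (by fun_prop) (by fun_prop), deriv_fun_add (by fun_prop) (by fun_prop)]
    rw [congrFun (deriv_quad d2) x]
    rw [deriv_fun_mul (by fun_prop) (d1.differentiableAt),
      deriv_const_mul _ (d0.differentiableAt)]
    have hc : deriv (fun x : ℝ => 2 * c * x * (↑n + 2)) x = 2 * c * (↑n + 2) := by
      simpa using ((hasDerivAt_id x).const_mul (2 * c) |>.mul_const ((n : ℝ) + 2)).deriv
    rw [hc]
    simp only [← iteratedDeriv_succ]
    push_cast; ring

section main

private lemma hasDerivAt_f (t : ℝ) (ht : 0 < t) (x : ℝ) :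
    HasDerivAt (fun u : ℝ => Real.exp (Real.arsinh (u * Real.sqrt t) / Real.sqrt t))
      (Real.exp (Real.arsinh (x * Real.sqrt t) / Real.sqrt t) * (Real.sqrt (1 + t * x ^ 2))⁻¹)
      x := by
  have hs : Real.sqrt t ^ 2 = t := Real.sq_sqrt ht.le
  have hs0 : Real.sqrt t ≠ 0 := by positivity
  have h1 : HasDerivAt (fun u : ℝ => u * Real.sqrt t) (Real.sqrt t) x := by
    simpa using (hasDerivAt_id x).mul_const (Real.sqrt t)
  have h2 := (Real.hasDerivAt_arsinh (x * Real.sqrt t)).comp x h1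
  have h3 := (h2.div_const (Real.sqrt t)).exp
  have heq : 1 + (x * Real.sqrt t) ^ 2 = 1 + t * x ^ 2 := by rw [mul_pow, hs]; ring
  rw [heq] at h3
  refine h3.congr_deriv ?_
  rw [mul_div_cancel_right₀ _ hs0]
  rfl

private noncomputable def fF (t : ℝ) : ℝ → ℝ := fun u => Real.exp (Real.arsinh (u * Real.sqrt t) / Real.sqrt t)

private lemma contDiff_fF (t : ℝ) : ContDiff ℝ ∞ (fF t) :=
  Real.contDiff_exp.comp
    ((Real.contDiff_arsinh.comp (contDiff_id.mul contDiff_const)).div_const _)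

private lemma deriv_fF (t : ℝ) (ht : 0 < t) :
    deriv (fF t) = fun x => fF t x * (Real.sqrt (1 + t * x ^ 2))⁻¹ :=
  funext fun x => (hasDerivAt_f t ht x).deriv

private lemma hasDeriv_B (t : ℝ) (ht : 0 < t) (x : ℝ) :
    HasDerivAt (fun x : ℝ => Real.sqrt (1 + t * x ^ 2))
      (t * x / Real.sqrt (1 + t * x ^ 2)) x := by
  have h0 : (0:ℝ) < 1 + t * x ^ 2 := by positivity
  have h1 : HasDerivAt (fun x : ℝ => 1 + t * x ^ 2) (t * (2 * x ^ 1)) x :=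
    ((hasDerivAt_pow 2 x).const_mul t).const_add 1
  have h2 := (Real.hasDerivAt_sqrt h0.ne').comp x h1
  have hBne : Real.sqrt (1 + t * x ^ 2) ≠ 0 := by positivity
  refine h2.congr_deriv ?_
  field_simp

private lemma deriv2_fF (t : ℝ) (ht : 0 < t) (x : ℝ) :
    deriv (deriv (fF t)) x =
      fF t x * (Real.sqrt (1 + t * x ^ 2))⁻¹ * (Real.sqrt (1 + t * x ^ 2))⁻¹ +
        fF t x * (-(t * x / Real.sqrt (1 + t * x ^ 2)) / Real.sqrt (1 + t * x ^ 2) ^ 2) := by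
  have hBne : Real.sqrt (1 + t * x ^ 2) ≠ 0 := by positivity
  rw [deriv_fF t ht]
  exact ((hasDerivAt_f t ht x).mul ((hasDeriv_B t ht x).inv hBne)).deriv

private lemma ode_fF (t : ℝ) (ht : 0 < t) (x : ℝ) :
    fF t x = (1 + t * x ^ 2) * deriv (deriv (fF t)) x + t * x * deriv (fF t) x := by
  have h0 : (0:ℝ) < 1 + t * x ^ 2 := by positivity
  rw [deriv2_fF t ht, deriv_fF t ht]
  set B := Real.sqrt (1 + t * x ^ 2) with hBdef
  have hB2 : B ^ 2 = 1 + t * x ^ 2 := Real.sq_sqrt h0.le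
  have hBne : B ≠ 0 := by rw [hBdef]; positivity
  rw [← hB2]
  field_simp
  ring

private lemma arec (t : ℝ) (ht : 0 < t) (k : ℕ) :
    iteratedDeriv (k + 2) (fF t) 0 = (1 - (k : ℝ) ^ 2 * t) * iteratedDeriv k (fF t) 0 := by
  have hf : ContDiff ℝ ∞ (fF t) := contDiff_fF t
  have hf1 : ContDiff ℝ ∞ (deriv (fF t)) := contDiff_deriv hf
  have hf2 : ContDiff ℝ ∞ (deriv (deriv (fF t))) := contDiff_deriv hf1
  have hfun : fF t = fun x => (1 + t * x ^ 2) * deriv (deriv (fF t)) x +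
      t * x * deriv (fF t) x := funext (ode_fF t ht)
  have hq : ContDiff ℝ ∞ (fun x => (1 + t * x ^ 2) * deriv (deriv (fF t)) x) := by
    fun_prop
  have hl : ContDiff ℝ ∞ (fun x => t * x * deriv (fF t) x) := by fun_prop
  have sh2 : ∀ m : ℕ, iteratedDeriv m (deriv (deriv (fF t))) = iteratedDeriv (m + 2) (fF t) := by
    intro m
    have h : m + 2 = m + 1 + 1 := rfl
    rw [h, iteratedDeriv_succ', iteratedDeriv_succ']
  have sh1 : ∀ m : ℕ, iteratedDeriv m (deriv (fF t)) = iteratedDeriv (m + 1) (fF t) := by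
    intro m; rw [iteratedDeriv_succ']
  match k with
  | 0 =>
    have h2 : iteratedDeriv 2 (fF t) 0 = deriv (deriv (fF t)) 0 := by
      have := congrFun (sh2 0) 0
      simpa [iteratedDeriv_zero] using this.symm
    have := ode_fF t ht 0
    norm_num at this
    rw [h2]
    norm_num
    linarith [this]
  | 1 =>
    have hd1 : Differentiable ℝ (deriv (fF t)) := hf1.differentiable (by norm_num)
    have hd2 : Differentiable ℝ (deriv (deriv (fF t))) := hf2.differentiable (by norm_num)
    have h1 : deriv (fF t) 0 = iteratedDeriv 3 (fF t) 0 + t * deriv (fF t) 0 := by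
      conv_lhs => rw [hfun]
      rw [deriv_fun_add (by fun_prop) (by fun_prop)]
      rw [congrFun (deriv_quad hd2) 0, congrFun (deriv_lin hd1) 0]
      have h3 : deriv (deriv (deriv (fF t))) 0 = iteratedDeriv 3 (fF t) 0 := by
        have := congrFun (sh2 1) 0
        rw [iteratedDeriv_one] at this
        simpa using this
      rw [h3]
      norm_num
    rw [show (3:ℕ) = 1 + 2 from rfl] at h1
    rw [iteratedDeriv_one]
    norm_num
    linarith [h1]
  | m + 2 =>
    have hQ : iteratedDeriv (m + 2) (fun x => (1 + t * x ^ 2) * deriv (deriv (fF t)) x) 0 =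
        iteratedDeriv (m + 2) (deriv (deriv (fF t))) 0 +
          t * (m + 2) * (m + 1) * iteratedDeriv m (deriv (deriv (fF t))) 0 := by
      rw [leib_quad hf2 m]
      norm_num
    have hL : iteratedDeriv (m + 2) (fun x => t * x * deriv (fF t) x) 0 =
        t * (m + 2) * iteratedDeriv (m + 1) (deriv (fF t)) 0 := by
      have h := congrFun (leib_lin (c := t) hf1 (m + 1)) 0
      have he : m + 1 + 1 = m + 2 := rfl
      rw [he] at h
      rw [h]
      push_cast
      ring
    have key : iteratedDeriv (m + 2) (fF t) 0 =
        iteratedDeriv (m + 4) (fF t) 0 +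
          t * (m + 2) * (m + 1) * iteratedDeriv (m + 2) (fF t) 0 +
          t * (m + 2) * iteratedDeriv (m + 2) (fF t) 0 := by
      conv_lhs => rw [hfun]
      rw [iter_add hq hl]
      simp only []
      rw [hQ, hL, sh2, sh2, sh1]
    push_cast
    linear_combination -key

private noncomputable def rhsP (t : ℝ) (n : ℕ) : ℝ :=
  if n ≤ 1 then 1
  else ∏ i ∈ Finset.range ((n - 2) / 2 + 1), (1 - ((n : ℝ) - 2 - 2 * i) ^ 2 * t)

private lemma rhsP_zero (t : ℝ) : rhsP t 0 = 1 := by simp [rhsP]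

private lemma rhsP_one (t : ℝ) : rhsP t 1 = 1 := by simp [rhsP]

private lemma rhsP_rec (t : ℝ) (k : ℕ) :
    rhsP t (k + 2) = (1 - (k : ℝ) ^ 2 * t) * rhsP t k := by
  match k with
  | 0 => norm_num [rhsP, Finset.prod_range_one]
  | 1 => norm_num [rhsP, Finset.prod_range_one]
  | k + 2 =>
    have h1 : (k + 2 + 2 - 2) / 2 + 1 = (k + 2 - 2) / 2 + 1 + 1 := by omega
    simp only [rhsP, if_neg (by omega : ¬ k + 2 + 2 ≤ 1), if_neg (by omega : ¬ k + 2 ≤ 1)]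
    rw [h1, Finset.prod_range_succ']
    rw [mul_comm]
    congr 1
    · push_cast; ring
    · exact Finset.prod_congr rfl fun i _ => by push_cast; ring

private lemma a_zero (t : ℝ) : iteratedDeriv 0 (fF t) 0 = 1 := by
  simp [fF]

private lemma a_one (t : ℝ) (ht : 0 < t) : iteratedDeriv 1 (fF t) 0 = 1 := by
  rw [iteratedDeriv_one, deriv_fF t ht]
  have h : fF t 0 = 1 := by simp [fF]
  simp only []
  rw [h]
  norm_num

private lemma a_eq_rhs (t : ℝ) (ht : 0 < t) (n : ℕ) :
    iteratedDeriv n (fF t) 0 = rhsP t n := by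
  have H : ∀ m : ℕ, iteratedDeriv m (fF t) 0 = rhsP t m ∧
      iteratedDeriv (m + 1) (fF t) 0 = rhsP t (m + 1) := by
    intro m
    induction m with
    | zero => exact ⟨by rw [a_zero, rhsP_zero], by rw [a_one t ht, rhsP_one]⟩
    | succ k ih => exact ⟨ih.2, by rw [arec t ht k, ih.1, rhsP_rec]⟩
  exact (H n).1


/-- For every real `t > 0` and every natural `n`, the `n`-th derivative at `0` of
`u ↦ exp(arsinh(u·√t)/√t)` equals `∏_{i=0}^{⌊(n−2)/2⌋} (1 − (n−2−2i)²·t)`, the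
product being empty (equal to `1`) when `n ≤ 1`. -/
theorem iteratedDeriv_exp_arsinh_scaled (t : ℝ) (ht : 0 < t) (n : ℕ) :
    iteratedDeriv n
        (fun u : ℝ => Real.exp (Real.arsinh (u * Real.sqrt t) / Real.sqrt t)) 0 =
      if n ≤ 1 then 1
      else ∏ i ∈ Finset.range ((n - 2) / 2 + 1), (1 - ((n : ℝ) - 2 - 2 * i) ^ 2 * t) := by
  exact a_eq_rhs t ht n
end main
end

section
/- For every real t with t > 0 and t ≠ 1, and for all real u, the function f(u) = ((−u·t + √(1 + u²·t))/(1 − t)) · exp(arsinh(u·√t)/√t) is differentiable and satisfies f'(u) = exp(arsinh(u·√t)/√t). (This is the one-variable specialization of the statement that the derivative with respect to p₁ of the extended cycle index Z⁺_Λ equals the cycle index of Λ'.) -/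
/-- For `t > 0`, `t ≠ 1`, the function
`f(u) = ((−u·t + √(1 + u²·t))/(1 − t)) · exp(arsinh(u·√t)/√t)` is differentiable
with `f'(u) = exp(arsinh(u·√t)/√t)`. -/
theorem extended_cycle_index_deriv (t : ℝ) (ht : 0 < t) (ht1 : t ≠ 1) :
    let f : ℝ → ℝ := fun u =>
      ((-u * t + Real.sqrt (1 + u ^ 2 * t)) / (1 - t)) *
        Real.exp (Real.arsinh (u * Real.sqrt t) / Real.sqrt t)
    (∀ u : ℝ, DifferentiableAt ℝ f u) ∧
    ∀ u : ℝ, deriv f u = Real.exp (Real.arsinh (u * Real.sqrt t) / Real.sqrt t) := by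
  intro f
  have hs : 0 < Real.sqrt t := Real.sqrt_pos.mpr ht
  have hst : Real.sqrt t ^ 2 = t := Real.sq_sqrt ht.le
  have h1t : (1 : ℝ) - t ≠ 0 := sub_ne_zero.mpr (Ne.symm ht1)
  have key : ∀ u : ℝ, HasDerivAt f
      (Real.exp (Real.arsinh (u * Real.sqrt t) / Real.sqrt t)) u := by
    intro u
    have hQ : 0 < 1 + u ^ 2 * t := by positivity
    have hR : 0 < Real.sqrt (1 + u ^ 2 * t) := Real.sqrt_pos.mpr hQ
    have hsq : (u * Real.sqrt t) ^ 2 = u ^ 2 * t := by rw [mul_pow, hst]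
    have h1 : HasDerivAt (fun u : ℝ => Real.arsinh (u * Real.sqrt t))
        (Real.sqrt t / Real.sqrt (1 + u ^ 2 * t)) u := by
      have := (Real.hasDerivAt_arsinh (u * Real.sqrt t)).comp u
        ((hasDerivAt_id u).mul_const (Real.sqrt t))
      convert this using 1
      · rfl
      · rfl
      · rfl
      rw [hsq]
      field_simp
    have h2 : HasDerivAt (fun u : ℝ => Real.arsinh (u * Real.sqrt t) / Real.sqrt t)
        (1 / Real.sqrt (1 + u ^ 2 * t)) u := by
      have := h1.div_const (Real.sqrt t)
      convert this using 1
      · rfl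
      · rfl
      field_simp
    have h3 : HasDerivAt (fun u : ℝ => Real.exp (Real.arsinh (u * Real.sqrt t) / Real.sqrt t))
        (Real.exp (Real.arsinh (u * Real.sqrt t) / Real.sqrt t) / Real.sqrt (1 + u ^ 2 * t))
        u := by
      have := h2.exp
      convert this using 1
      ring
    have h4 : HasDerivAt (fun u : ℝ => Real.sqrt (1 + u ^ 2 * t))
        (u * t / Real.sqrt (1 + u ^ 2 * t)) u := by
      have hinner : HasDerivAt (fun u : ℝ => 1 + u ^ 2 * t) (2 * u * t) u := by
        have := ((hasDerivAt_pow 2 u).mul_const t).const_add 1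
        convert this using 1
        · rfl
        · rfl
        ring
      have := (Real.hasDerivAt_sqrt hQ.ne').comp u hinner
      convert this using 1
      · rfl
      · rfl
      · rfl
      field_simp
    have h5 : HasDerivAt (fun u : ℝ => (-u * t + Real.sqrt (1 + u ^ 2 * t)) / (1 - t))
        ((-t + u * t / Real.sqrt (1 + u ^ 2 * t)) / (1 - t)) u := by
      have hlin : HasDerivAt (fun u : ℝ => -u * t) (-t) u := by
        have := ((hasDerivAt_id u).neg.mul_const t)
        convert this using 1
        · rfl
        · rfl
        · rfl
        ring
      exact (hlin.add h4).div_const (1 - t)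
    have := h5.mul h3
    convert this using 1
    · rfl
    · rfl
    · rfl
    have hRne := hR.ne'
    field_simp
    ring
  exact ⟨fun u => (key u).differentiableAt, fun u => (key u).deriv⟩
end

section
/- Let (n_m)_{m≥1} be a finitely supported family of nonnegative integers, set o_m = ∑_{k≥1, 2^k ∣ m} (m/2^k)·n_{m/2^k}, let g_l = 1 if l is a power of 2 (including l = 1) and g_l = 0 otherwise, and define the integer E = ∏_{l : n_l ≥ 1} (g_l + o_l) · ∏_{i=0}^{n_l − 2} (g_l + o_l + l·(n_l − 2 − 2i)) (inner product empty when n_l = 1, factor 1 when n_l = 0). Then E ≠ 0 if and only if n_l = 0 for every l that is not a power of 2 and there exists an integer k ≥ 0 with n_{2^j} = 1 for all 0 ≤ j < k and n_{2^k} even; moreover, in that case E = 2^{k(k−1)/2} · ∏_{j ≥ k, n_{2^j} ≥ 1} (1 + o_{2^j}) · ∏_{i=0}^{n_{2^j} − 2} (1 + o_{2^j} + 2^j·(n_{2^j} − 2 − 2i)). (This is the Euler character of \overline{M_{0,n}}(ℝ) at a permutation with n_1 + 1 fixed points and n_m m-cycles for m > 1, in the case where the permutation has a fixed point.) -/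
open scoped Classical

lemma oFun_pow2 (n : ℕ →₀ ℕ) (j : ℕ) :
    oFun n (2 ^ j) = ∑ i ∈ Finset.range j, 2 ^ i * n (2 ^ i) := by
  unfold oFun
  have hset : (Finset.Icc 1 (2 ^ j)).filter (fun k => 2 ^ k ∣ 2 ^ j) = Finset.Icc 1 j := by
    ext k
    simp only [Finset.mem_filter, Finset.mem_Icc]
    constructor
    · rintro ⟨⟨h1, _⟩, hdvd⟩
      exact ⟨h1, (Nat.pow_dvd_pow_iff_le_right one_lt_two).mp hdvd⟩
    · rintro ⟨h1, h2⟩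
      exact ⟨⟨h1, h2.trans (Nat.le_of_lt (Nat.lt_two_pow_self (n := j)))⟩, pow_dvd_pow 2 h2⟩
  rw [hset]
  refine Finset.sum_nbij' (i := fun k => j - k) (j := fun i => j - i) ?_ ?_ ?_ ?_ ?_
  · intro a ha; simp only [Finset.mem_Icc] at ha; simp only [Finset.mem_range]; omega
  · intro a ha; simp only [Finset.mem_range] at ha; simp only [Finset.mem_Icc]; omega
  · intro a ha; simp only [Finset.mem_Icc] at ha; omega
  · intro a ha; simp only [Finset.mem_range] at ha; omega
  · intro a ha; simp only [Finset.mem_Icc] at ha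
    rw [Nat.pow_div ha.2 (by norm_num)]

lemma sum_two_pow (j : ℕ) : ∑ i ∈ Finset.range j, 2 ^ i = 2 ^ j - 1 := by
  induction j with
  | zero => simp
  | succ j ih => rw [Finset.sum_range_succ, ih, pow_succ]; omega

lemma oFun_pow2_of_ones (n : ℕ →₀ ℕ) (k j : ℕ) (h1 : ∀ i, i < k → n (2 ^ i) = 1)
    (hj : j ≤ k) : oFun n (2 ^ j) = 2 ^ j - 1 := by
  rw [oFun_pow2]
  rw [show ∑ i ∈ Finset.range j, 2 ^ i * n (2 ^ i) = ∑ i ∈ Finset.range j, 2 ^ i by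
    apply Finset.sum_congr rfl; intro i hi
    rw [h1 i (lt_of_lt_of_le (Finset.mem_range.mp hi) hj), mul_one]]
  exact sum_two_pow j

lemma one_add_oFun (n : ℕ →₀ ℕ) (k j : ℕ) (h1 : ∀ i, i < k → n (2 ^ i) = 1)
    (hk : Even (n (2 ^ k))) (hj : k ≤ j) :
    ∃ u, Odd u ∧ 1 + oFun n (2 ^ j) = 2 ^ k * u := by
  rw [oFun_pow2]
  rw [Finset.range_eq_Ico, ← Finset.sum_Ico_consecutive _ (Nat.zero_le k) hj]
  rw [← Finset.range_eq_Ico, show ∑ i ∈ Finset.range k, 2 ^ i * n (2 ^ i)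
      = ∑ i ∈ Finset.range k, 2 ^ i by
    apply Finset.sum_congr rfl; intro i hi
    rw [h1 i (Finset.mem_range.mp hi), mul_one], sum_two_pow k]
  have hterm : ∀ i ∈ Finset.Ico k j, 2 ^ i * n (2 ^ i) = 2 ^ k * (2 ^ (i - k) * n (2 ^ i)) := by
    intro i hi
    simp only [Finset.mem_Ico] at hi
    rw [← mul_assoc, ← pow_add]
    congr 2
    omega
  rw [Finset.sum_congr rfl hterm, ← Finset.mul_sum]
  refine ⟨1 + ∑ i ∈ Finset.Ico k j, 2 ^ (i - k) * n (2 ^ i), ?_, ?_⟩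
  · rw [add_comm]; apply Even.add_one
    apply Finset.even_sum
    intro i hi
    simp only [Finset.mem_Ico] at hi
    rcases Nat.eq_or_lt_of_le hi.1 with h | h
    · subst h; simpa using hk
    · exact (Nat.even_pow.mpr ⟨even_iff_two_dvd.mpr ⟨1, rfl⟩, by omega⟩).mul_right _
  · have h2 : 1 ≤ 2 ^ k := Nat.one_le_two_pow
    rw [Nat.mul_add, mul_one]
    omega

lemma inner_factor_ne_zero (n : ℕ →₀ ℕ) (k j : ℕ) (h1 : ∀ i, i < k → n (2 ^ i) = 1)
    (hk : Even (n (2 ^ k))) (hj : k ≤ j) (i : ℕ) :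
    (1 : ℤ) + (oFun n (2 ^ j) : ℤ) + ((2 ^ j : ℕ) : ℤ) * ((n (2 ^ j) : ℤ) - 2 - 2 * (i : ℤ)) ≠ 0 := by
  obtain ⟨u, hu, heq⟩ := one_add_oFun n k j h1 hk hj
  intro hcontra
  have heqZ : (1 : ℤ) + (oFun n (2 ^ j) : ℤ) = 2 ^ k * u := by exact_mod_cast congrArg (Nat.cast : ℕ → ℤ) heq
  have hsplit : (2 : ℤ) ^ j = 2 ^ k * 2 ^ (j - k) := by
    rw [← pow_add]; congr 1; omega
  have hu2 : (u : ℤ) = 2 ^ (j - k) * (2 * (i : ℤ) + 2 - (n (2 ^ j) : ℤ)) := by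
    have h2 : (2 : ℤ) ^ k * u = 2 ^ k * (2 ^ (j - k) * (2 * (i : ℤ) + 2 - (n (2 ^ j) : ℤ))) := by
      rw [← mul_assoc, ← hsplit]
      push_cast at hcontra ⊢
      linarith
    exact mul_left_cancel₀ (by positivity) h2
  rcases Nat.eq_or_lt_of_le hj with h | h
  · subst h
    rw [show k - k = 0 by omega] at hu2
    simp only [pow_zero, one_mul] at hu2
    obtain ⟨c, hc⟩ := hu
    obtain ⟨d, hd⟩ := hk
    omega
  · rw [show j - k = (j - k - 1) + 1 by omega, pow_succ] at hu2
    have hdvd : (2 : ℤ) ∣ (u : ℤ) :=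
      ⟨2 ^ (j - k - 1) * (2 * (i : ℤ) + 2 - (n (2 ^ j) : ℤ)), by rw [hu2]; ring⟩
    obtain ⟨e, he⟩ := hdvd
    obtain ⟨c, hc⟩ := hu
    omega

noncomputable def fac (n : ℕ →₀ ℕ) (g : ℕ → ℤ) (l : ℕ) : ℤ :=
  (g l + (oFun n l : ℤ)) *
    ∏ i ∈ Finset.range (n l - 1),
      (g l + (oFun n l : ℤ) + (l : ℤ) * ((n l : ℤ) - 2 - 2 * (i : ℤ)))

lemma prod_eq_zero_nonpow2 (n : ℕ →₀ ℕ) (h0 : n 0 = 0) (g : ℕ → ℤ)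
    (hg0 : ∀ l : ℕ, ¬ (∃ k : ℕ, l = 2 ^ k) → g l = 0)
    (hex : ∃ l, n l ≠ 0 ∧ ¬∃ k : ℕ, l = 2 ^ k) :
    ∏ l ∈ n.support, fac n g l = 0 := by
  obtain ⟨hn0, hnp⟩ := Nat.find_spec hex
  have hl0pos : 0 < Nat.find hex := by
    rcases Nat.eq_zero_or_pos (Nat.find hex) with h | h
    · exfalso; rw [h] at hn0; exact hn0 h0
    · exact h
  have hO : oFun n (Nat.find hex) = 0 := by
    apply Finset.sum_eq_zero
    intro k hk
    simp only [Finset.mem_filter, Finset.mem_Icc] at hk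
    obtain ⟨⟨hk1, hk2⟩, hdvd⟩ := hk
    by_contra hne
    have hnm : n (Nat.find hex / 2 ^ k) ≠ 0 := by
      intro h; rw [h, mul_zero] at hne; exact hne rfl
    have h2k : 1 < 2 ^ k := by
      calc 1 < 2 ^ 1 := by norm_num
      _ ≤ 2 ^ k := Nat.pow_le_pow_right (by norm_num) hk1
    have hmlt : Nat.find hex / 2 ^ k < Nat.find hex := Nat.div_lt_self hl0pos h2k
    have hmin := Nat.find_min hex hmlt
    have hmp : ∃ a, Nat.find hex / 2 ^ k = 2 ^ a := by
      by_contra h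
      exact hmin ⟨hnm, h⟩
    obtain ⟨a, ha⟩ := hmp
    apply hnp
    have heq : Nat.find hex = 2 ^ k * (Nat.find hex / 2 ^ k) := (Nat.mul_div_cancel' hdvd).symm
    exact ⟨k + a, by rw [heq, ha, pow_add]⟩
  apply Finset.prod_eq_zero (Finsupp.mem_support_iff.mpr hn0)
  unfold fac
  rw [hg0 _ hnp, hO]
  simp

lemma prod_eq_zero_odd (n : ℕ →₀ ℕ) (g : ℕ → ℤ)
    (hg1 : ∀ l : ℕ, (∃ k : ℕ, l = 2 ^ k) → g l = 1) (k : ℕ)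
    (h1 : ∀ j, j < k → n (2 ^ j) = 1) (hodd : Odd (n (2 ^ k))) (hne1 : n (2 ^ k) ≠ 1) :
    ∏ l ∈ n.support, fac n g l = 0 := by
  obtain ⟨c, hc⟩ := hodd
  have hc1 : 1 ≤ c := by omega
  have hmem : (2 : ℕ) ^ k ∈ n.support := Finsupp.mem_support_iff.mpr (by omega)
  apply Finset.prod_eq_zero hmem
  unfold fac
  rw [hg1 _ ⟨k, rfl⟩, oFun_pow2_of_ones n k k h1 le_rfl]
  apply mul_eq_zero_of_right
  apply Finset.prod_eq_zero (i := c) (Finset.mem_range.mpr (by omega))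
  have hcast : ((2 ^ k - 1 : ℕ) : ℤ) = 2 ^ k - 1 := by
    have h1le : (1 : ℕ) ≤ 2 ^ k := Nat.one_le_two_pow
    push_cast [h1le]
    ring
  rw [hcast, hc]
  push_cast
  ring

lemma prod_ne_zero_main (n : ℕ →₀ ℕ) (g : ℕ → ℤ)
    (hg1 : ∀ l : ℕ, (∃ k : ℕ, l = 2 ^ k) → g l = 1)
    (hsupp : ∀ l : ℕ, ¬ (∃ k : ℕ, l = 2 ^ k) → n l = 0) (k : ℕ)
    (h1 : ∀ j, j < k → n (2 ^ j) = 1) (heven : Even (n (2 ^ k))) :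
    ∏ l ∈ n.support, fac n g l ≠ 0 := by
  rw [Finset.prod_ne_zero_iff]
  intro l hl
  have hnl : n l ≠ 0 := Finsupp.mem_support_iff.mp hl
  obtain ⟨j, rfl⟩ : ∃ j, l = 2 ^ j := by
    by_contra h; exact hnl (hsupp l h)
  unfold fac
  rw [hg1 _ ⟨j, rfl⟩]
  apply mul_ne_zero
  · positivity
  · rcases lt_or_ge j k with h | h
    · rw [h1 j h]; simp
    · rw [Finset.prod_ne_zero_iff]
      intro i _
      exact inner_factor_ne_zero n k j h1 heven h i

lemma prod_formula (n : ℕ →₀ ℕ) (g : ℕ → ℤ)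
    (hg1 : ∀ l : ℕ, (∃ k : ℕ, l = 2 ^ k) → g l = 1)
    (hsupp : ∀ l : ℕ, ¬ (∃ k : ℕ, l = 2 ^ k) → n l = 0) (k : ℕ)
    (h1 : ∀ j, j < k → n (2 ^ j) = 1) :
    ∏ l ∈ n.support, fac n g l = 2 ^ (k * (k - 1) / 2) *
      ∏ l ∈ n.support.filter (fun l => ∃ j : ℕ, k ≤ j ∧ l = 2 ^ j),
        ((1 + (oFun n l : ℤ)) *
          ∏ i ∈ Finset.range (n l - 1),
            (1 + (oFun n l : ℤ) + (l : ℤ) * ((n l : ℤ) - 2 - 2 * (i : ℤ)))) := by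
  classical
  rw [← Finset.prod_filter_mul_prod_filter_not n.support
    (fun l => ∃ j : ℕ, k ≤ j ∧ l = 2 ^ j) (fac n g), mul_comm]
  congr 1
  · have hA : n.support.filter (fun l => ¬ ∃ j : ℕ, k ≤ j ∧ l = 2 ^ j)
        = (Finset.range k).image (2 ^ ·) := by
      ext l
      simp only [Finset.mem_filter, Finset.mem_image, Finset.mem_range,
        Finsupp.mem_support_iff]
      constructor
      · rintro ⟨hnl, hnp⟩
        obtain ⟨j, rfl⟩ : ∃ j, l = 2 ^ j := by
          by_contra h; exact hnl (hsupp l h)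
        refine ⟨j, ?_, rfl⟩
        by_contra hjk
        exact hnp ⟨j, by omega, rfl⟩
      · rintro ⟨j, hj, rfl⟩
        refine ⟨by rw [h1 j hj]; omega, ?_⟩
        rintro ⟨j', hj', hjj⟩
        have : j = j' := Nat.pow_right_injective le_rfl hjj
        omega
    rw [hA, Finset.prod_image (fun a _ b _ h => Nat.pow_right_injective le_rfl h)]
    have hfac : ∀ j ∈ Finset.range k, fac n g (2 ^ j) = 2 ^ j := by
      intro j hj
      simp only [Finset.mem_range] at hj
      unfold fac
      rw [h1 j hj, hg1 _ ⟨j, rfl⟩, oFun_pow2_of_ones n k j h1 (le_of_lt hj)]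
      have hcast : ((2 ^ j - 1 : ℕ) : ℤ) = 2 ^ j - 1 := by
        have h1le : (1 : ℕ) ≤ 2 ^ j := Nat.one_le_two_pow
        push_cast [h1le]
        ring
      rw [hcast]
      push_cast
      simp
    rw [Finset.prod_congr rfl hfac, Finset.prod_pow_eq_pow_sum]
    congr 1
    have := Finset.sum_range_id_mul_two k
    omega
  · apply Finset.prod_congr rfl
    intro l hl
    simp only [Finset.mem_filter] at hl
    obtain ⟨-, j, hj, rfl⟩ := hl
    unfold fac
    rw [hg1 _ ⟨j, rfl⟩]

/-- Euler character criterion and product formula in the fixed-point case: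
with `g_l = 1` for `l` a power of `2` and `g_l = 0` otherwise, the integer
`E = ∏_{l : n_l ≥ 1} (g_l + o_l) · ∏_{i=0}^{n_l−2} (g_l + o_l + l·(n_l−2−2i))`
is nonzero iff `n` is supported on powers of `2` and there is `k ≥ 0` with
`n_{2^j} = 1` for `j < k` and `n_{2^k}` even; in that case
`E = 2^{k(k−1)/2} · ∏_{j ≥ k, n_{2^j} ≥ 1} (1 + o_{2^j}) ·
∏_{i=0}^{n_{2^j}−2} (1 + o_{2^j} + 2^j·(n_{2^j}−2−2i))`. -/
theorem euler_char_fixed_point_case (n : ℕ →₀ ℕ) (h0 : n 0 = 0) (g : ℕ → ℤ)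
    (hg1 : ∀ l : ℕ, (∃ k : ℕ, l = 2 ^ k) → g l = 1)
    (hg0 : ∀ l : ℕ, ¬ (∃ k : ℕ, l = 2 ^ k) → g l = 0) :
    let E : ℤ := ∏ l ∈ n.support,
      (g l + (oFun n l : ℤ)) *
        ∏ i ∈ Finset.range (n l - 1),
          (g l + (oFun n l : ℤ) + (l : ℤ) * ((n l : ℤ) - 2 - 2 * (i : ℤ)))
    (E ≠ 0 ↔
      (∀ l : ℕ, ¬ (∃ k : ℕ, l = 2 ^ k) → n l = 0) ∧
      ∃ k : ℕ, (∀ j : ℕ, j < k → n (2 ^ j) = 1) ∧ Even (n (2 ^ k))) ∧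
    ∀ k : ℕ, (∀ l : ℕ, ¬ (∃ k' : ℕ, l = 2 ^ k') → n l = 0) →
      (∀ j : ℕ, j < k → n (2 ^ j) = 1) → Even (n (2 ^ k)) →
      E = 2 ^ (k * (k - 1) / 2) *
        ∏ l ∈ n.support.filter (fun l => ∃ j : ℕ, k ≤ j ∧ l = 2 ^ j),
          ((1 + (oFun n l : ℤ)) *
            ∏ i ∈ Finset.range (n l - 1),
              (1 + (oFun n l : ℤ) + (l : ℤ) * ((n l : ℤ) - 2 - 2 * (i : ℤ)))) := by
  intro E
  have hE : E = ∏ l ∈ n.support, fac n g l := rfl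
  constructor
  · constructor
    · intro hne
      have hsupp : ∀ l : ℕ, ¬ (∃ k : ℕ, l = 2 ^ k) → n l = 0 := by
        intro l hl
        by_contra hnl
        exact hne (hE ▸ prod_eq_zero_nonpow2 n h0 g hg0 ⟨l, hnl, hl⟩)
      refine ⟨hsupp, ?_⟩
      have hQ : ∃ j, n (2 ^ j) ≠ 1 := by
        by_contra hq
        push_neg at hq
        have h2 : (2 : ℕ) ^ (n.support.sup id + 1) ∈ n.support :=
          Finsupp.mem_support_iff.mpr (by rw [hq]; omega)
        have hle := Finset.le_sup (f := id) h2
        have hlt := Nat.lt_two_pow_self (n := n.support.sup id + 1)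
        simp only [id] at hle
        omega
      refine ⟨Nat.find hQ, fun j hj => ?_, ?_⟩
      · have := Nat.find_min hQ hj
        omega
      · by_contra hev
        rw [Nat.not_even_iff_odd] at hev
        exact hne (hE ▸ prod_eq_zero_odd n g hg1 (Nat.find hQ)
          (fun j hj => by have := Nat.find_min hQ hj; omega) hev (Nat.find_spec hQ))
    · rintro ⟨hsupp, k, h1, heven⟩
      rw [hE]
      exact prod_ne_zero_main n g hg1 hsupp k h1 heven
  · intro k hsupp h1 heven
    rw [hE]
    exact prod_formula n g hg1 hsupp k h1
end

section
/- Let (n_m)_{m≥1} be a finitely supported family of nonnegative integers and set o_m = ∑_{k≥1, 2^k ∣ m} (m/2^k)·n_{m/2^k}. Then the polynomial M(s) = ∏_{l : n_l ≥ 1} (γ_l(s²) + o_l·s^l) · ∏_{i=0}^{n_l − 2} (γ_l(s²) + (o_l + l·(n_l − 2 − 2i))·s^l) ∈ ℤ[s] satisfies M(−s) = M(s); that is, M is a polynomial in s², so the graded character formula, written in terms of t^{1/2} = s, is in fact a polynomial in t. -/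
open Polynomial

lemma oFun_odd (n : ℕ →₀ ℕ) (m : ℕ) (hm : Odd m) : oFun n m = 0 := by
  apply Finset.sum_eq_zero
  intro k hk
  simp only [Finset.mem_filter, Finset.mem_Icc] at hk
  exfalso
  have h2 : 2 ∣ m := dvd_trans (dvd_pow_self 2 (by omega : k ≠ 0)) hk.2
  exact (Nat.not_even_iff_odd.mpr hm) ((even_iff_two_dvd).mpr h2)

lemma gamma_comp (l : ℕ) :
    ((gammaPoly l).comp (Polynomial.X ^ 2)).comp (-Polynomial.X) =
      (gammaPoly l).comp (Polynomial.X ^ 2) := by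
  rw [Polynomial.comp_assoc]
  congr 1
  simp [Polynomial.pow_comp]

/-- The graded character in the variable `s = t^{1/2}`,
`M(s) = ∏_{l : n_l ≥ 1} (γ_l(s²) + o_l·s^l) ·
∏_{i=0}^{n_l−2} (γ_l(s²) + (o_l + l·(n_l−2−2i))·s^l)`,
is even: `M(−s) = M(s)`, i.e. it is a polynomial in `t = s²`. -/
theorem graded_character_even (n : ℕ →₀ ℕ) (h0 : n 0 = 0) :
    let M : Polynomial ℤ := ∏ l ∈ n.support,
      ((gammaPoly l).comp (Polynomial.X ^ 2) +
          Polynomial.C ((oFun n l : ℤ)) * Polynomial.X ^ l) *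
        ∏ i ∈ Finset.range (n l - 1),
          ((gammaPoly l).comp (Polynomial.X ^ 2) +
            Polynomial.C ((oFun n l : ℤ) + (l : ℤ) * ((n l : ℤ) - 2 - 2 * (i : ℤ))) *
              Polynomial.X ^ l)
    M.comp (-Polynomial.X) = M := by
  intro M
  show M.comp (-Polynomial.X) = M
  unfold M
  rw [Polynomial.prod_comp]
  apply Finset.prod_congr rfl
  intro l hl
  rw [Polynomial.mul_comp, Polynomial.prod_comp]
  by_cases hpar : Even l
  · have hx : ((Polynomial.X : Polynomial ℤ)^l).comp (-Polynomial.X) = Polynomial.X^l := by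
      simp [Polynomial.pow_comp, hpar.neg_pow]
    simp [Polynomial.add_comp, Polynomial.mul_comp, hx, gamma_comp]
  · have hodd : Odd l := Nat.not_even_iff_odd.mp hpar
    have ho : oFun n l = 0 := oFun_odd n l hodd
    have hx : ((Polynomial.X : Polynomial ℤ)^l).comp (-Polynomial.X) = -Polynomial.X^l := by
      simp [Polynomial.pow_comp, hodd.neg_pow]
    congr 1
    · simp [Polynomial.add_comp, Polynomial.mul_comp, hx, gamma_comp, ho]
    · rw [← Finset.prod_range_reflect]
      apply Finset.prod_congr rfl
      intro i hi
      simp only [Finset.mem_range] at hi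
      rw [Polynomial.add_comp, Polynomial.mul_comp, Polynomial.C_comp, hx, gamma_comp]
      have hcast : ((n l - 1 - 1 - i : ℕ) : ℤ) = (n l : ℤ) - 2 - i := by
        have h1 : 1 ≤ n l := by
          have := Finsupp.mem_support_iff.mp hl; omega
        omega
      rw [hcast, ho]
      have : ((l:ℤ) * ((n l : ℤ) - 2 - 2 * ((n l : ℤ) - 2 - (i:ℤ)))) = -((l:ℤ) * ((n l : ℤ) - 2 - 2 * (i:ℤ))) := by ring
      rw [this]
      simp only [Polynomial.C_neg, Nat.cast_zero, zero_add, neg_mul, mul_neg, neg_neg]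
end
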